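/- Let κ, θ, σ > 0, let y₀ ∈ ℝ, let λᵐ : ℝ → ℝ be continuous, set Λᵐ(t) = ∫₀ᵗ λᵐ(s) ds, and define ψ(t) = λᵐ(t) + D(t) − y₀·E(t). Then for every t ≥ 0, exp(−∫₀ᵗ ψ(s) ds) · A(t) · e^{−B(t)·y₀} = e^{−Λᵐ(t)}. -/

import Mathlib

open Real intervalIntegral

/-- CIR++ auxiliary quantity `h = √(κ² + 2σ²)`. -/
noncomputable def cirH (κ σ : ℝ) : ℝ := Real.sqrt (κ ^ 2 + 2 * σ ^ 2)

/-- CIR++ function `A(0,u)`. -/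
noncomputable def cirA (κ θ σ : ℝ) (u : ℝ) : ℝ :=
  let h := cirH κ σ
  (2 * h * Real.exp ((κ + h) * u / 2) / (2 * h + (κ + h) * (Real.exp (u * h) - 1)))
    ^ (2 * κ * θ / σ ^ 2)

/-- CIR++ function `B(0,u)`. -/
noncomputable def cirB (κ σ : ℝ) (u : ℝ) : ℝ :=
  let h := cirH κ σ
  2 * (Real.exp (u * h) - 1) / (2 * h + (κ + h) * (Real.exp (u * h) - 1))

/-- CIR++ function `D(t) = d/dt ln A(0,t)`. -/
noncomputable def cirD (κ θ σ : ℝ) (t : ℝ) : ℝ :=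
  let h := cirH κ σ
  (2 * κ * θ / σ ^ 2) *
    ((κ + h) / 2 - h * (κ + h) * Real.exp (t * h) / (2 * h + (κ + h) * (Real.exp (t * h) - 1)))

/-- CIR++ function `E(t) = d/dt B(0,t)`. -/
noncomputable def cirE (κ σ : ℝ) (t : ℝ) : ℝ :=
  let h := cirH κ σ
  4 * h ^ 2 * Real.exp (t * h) / (2 * h + (κ + h) * (Real.exp (t * h) - 1)) ^ 2

/-- Denominator appearing in the CIR++ formulas. -/
noncomputable def cirDen (κ σ : ℝ) (u : ℝ) : ℝ :=
  2 * cirH κ σ + (κ + cirH κ σ) * (Real.exp (u * cirH κ σ) - 1)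

/-- Logarithm of `A(0,u)`. -/
noncomputable def cirL (κ θ σ : ℝ) (u : ℝ) : ℝ :=
  (2 * κ * θ / σ ^ 2) *
    (Real.log (2 * cirH κ σ) + (κ + cirH κ σ) * u / 2 - Real.log (cirDen κ σ u))

lemma cirH_pos {κ σ : ℝ} (hκ : 0 < κ) (hσ : 0 < σ) : 0 < cirH κ σ :=
  Real.sqrt_pos.mpr (by positivity)

lemma cirDen_pos {κ σ : ℝ} (hκ : 0 < κ) (hσ : 0 < σ) {u : ℝ} (hu : 0 ≤ u) :
    0 < cirDen κ σ u := by
  have hh := cirH_pos hκ hσ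
  have h1 : (1:ℝ) ≤ Real.exp (u * cirH κ σ) := Real.one_le_exp (by positivity)
  have : 0 ≤ (κ + cirH κ σ) * (Real.exp (u * cirH κ σ) - 1) := by nlinarith
  unfold cirDen; nlinarith

lemma cirDen_cont (κ σ : ℝ) : Continuous (cirDen κ σ) := by
  unfold cirDen; fun_prop

lemma cirDen_hasDeriv (κ σ : ℝ) (u : ℝ) :
    HasDerivAt (cirDen κ σ) ((κ + cirH κ σ) * (cirH κ σ * Real.exp (u * cirH κ σ))) u := by
  have h1 : HasDerivAt (fun u : ℝ => Real.exp (u * cirH κ σ))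
      (Real.exp (u * cirH κ σ) * (1 * cirH κ σ)) u :=
    ((hasDerivAt_id u).mul_const (cirH κ σ)).exp
  have h2 := ((h1.sub_const 1).const_mul (κ + cirH κ σ)).const_add (2 * cirH κ σ)
  exact h2.congr_deriv (by ring)

lemma cirDen_zero {κ σ : ℝ} : cirDen κ σ 0 = 2 * cirH κ σ := by
  simp [cirDen]

lemma cirB_hasDeriv {κ σ : ℝ} (hκ : 0 < κ) (hσ : 0 < σ) {u : ℝ} (hu : 0 ≤ u) :
    HasDerivAt (cirB κ σ) (cirE κ σ u) u := by
  set h := cirH κ σ with hh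
  have hden := cirDen_pos hκ hσ hu
  have h1 : HasDerivAt (fun u : ℝ => Real.exp (u * h)) (Real.exp (u * h) * (1 * h)) u :=
    ((hasDerivAt_id u).mul_const h).exp
  have hnum : HasDerivAt (fun u : ℝ => 2 * (Real.exp (u * h) - 1))
      (2 * (Real.exp (u * h) * (1 * h))) u := (h1.sub_const 1).const_mul 2
  have hB : HasDerivAt (cirB κ σ)
      ((2 * (Real.exp (u * h) * (1 * h)) * cirDen κ σ u -
        2 * (Real.exp (u * h) - 1) * ((κ + h) * (h * Real.exp (u * h)))) /
        (cirDen κ σ u) ^ 2) u := by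
    have := hnum.div (cirDen_hasDeriv κ σ u) hden.ne'
    exact this
  convert hB using 1
  show 4 * h ^ 2 * Real.exp (u * h) / (cirDen κ σ u) ^ 2 = _
  rw [div_eq_div_iff (by positivity) (by positivity)]
  unfold cirDen
  rw [← hh]
  ring

lemma cirL_hasDeriv {κ θ σ : ℝ} (hκ : 0 < κ) (hσ : 0 < σ) {u : ℝ} (hu : 0 ≤ u) :
    HasDerivAt (cirL κ θ σ) (cirD κ θ σ u) u := by
  set h := cirH κ σ with hh
  have hden := cirDen_pos hκ hσ hu
  have hlog : HasDerivAt (fun u => Real.log (cirDen κ σ u))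
      ((κ + h) * (h * Real.exp (u * h)) / cirDen κ σ u) u :=
    (cirDen_hasDeriv κ σ u).log hden.ne'
  have h2 : HasDerivAt (fun u : ℝ => Real.log (2 * h) + (κ + h) * u / 2)
      ((κ + h) / 2) u := by
    have := ((hasDerivAt_id u).const_mul (κ + h)).div_const 2 |>.const_add (Real.log (2 * h))
    exact this.congr_deriv (by ring)
  have h3 := (h2.sub hlog).const_mul (2 * κ * θ / σ ^ 2)
  refine h3.congr_deriv (Eq.symm ?_)
  show cirD κ θ σ u = _
  unfold cirD cirDen
  rw [← hh]
  ring

lemma cirL_zero (κ θ σ : ℝ) : cirL κ θ σ 0 = 0 := by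
  simp [cirL, cirDen_zero]

lemma exp_cirL {κ θ σ : ℝ} (hκ : 0 < κ) (hσ : 0 < σ) {u : ℝ} (hu : 0 ≤ u) :
    Real.exp (cirL κ θ σ u) = cirA κ θ σ u := by
  set h := cirH κ σ with hh
  have hhpos := cirH_pos hκ hσ
  have hden := cirDen_pos hκ hσ hu
  have hbase : (0:ℝ) < 2 * h * Real.exp ((κ + h) * u / 2) / cirDen κ σ u := by positivity
  have hA : cirA κ θ σ u =
      (2 * h * Real.exp ((κ + h) * u / 2) / cirDen κ σ u) ^ (2 * κ * θ / σ ^ 2) := by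
    unfold cirA cirDen; rw [← hh]
  rw [hA, Real.rpow_def_of_pos hbase]
  congr 1
  rw [Real.log_div (by positivity) hden.ne', Real.log_mul (by positivity) (Real.exp_pos _).ne',
    Real.log_exp]
  unfold cirL
  rw [← hh]
  ring

lemma cirB_zero (κ σ : ℝ) : cirB κ σ 0 = 0 := by
  simp [cirB]

lemma cirD_contOn {κ θ σ : ℝ} (hκ : 0 < κ) (hσ : 0 < σ) {t : ℝ} (ht : 0 ≤ t) :
    ContinuousOn (cirD κ θ σ) (Set.uIcc 0 t) := by
  have hne : ∀ x ∈ Set.uIcc (0:ℝ) t, cirDen κ σ x ≠ 0 := by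
    intro x hx
    rw [Set.uIcc_of_le ht] at hx
    exact (cirDen_pos hκ hσ hx.1).ne'
  have : ContinuousOn (fun u => (2 * κ * θ / σ ^ 2) *
      ((κ + cirH κ σ) / 2 - cirH κ σ * (κ + cirH κ σ) * Real.exp (u * cirH κ σ) /
        cirDen κ σ u)) (Set.uIcc 0 t) := by
    apply ContinuousOn.mul continuousOn_const
    apply ContinuousOn.sub continuousOn_const
    exact ContinuousOn.div (by fun_prop) (cirDen_cont κ σ).continuousOn hne
  convert this using 2 with u
  rfl

lemma cirE_contOn {κ σ : ℝ} (hκ : 0 < κ) (hσ : 0 < σ) {t : ℝ} (ht : 0 ≤ t) :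
    ContinuousOn (cirE κ σ) (Set.uIcc 0 t) := by
  have hne : ∀ x ∈ Set.uIcc (0:ℝ) t, (cirDen κ σ x) ^ 2 ≠ 0 := by
    intro x hx
    rw [Set.uIcc_of_le ht] at hx
    exact pow_ne_zero _ (cirDen_pos hκ hσ hx.1).ne'
  have : ContinuousOn (fun u => 4 * cirH κ σ ^ 2 * Real.exp (u * cirH κ σ) /
      (cirDen κ σ u) ^ 2) (Set.uIcc 0 t) :=
    ContinuousOn.div (by fun_prop) (((cirDen_cont κ σ).pow 2).continuousOn) hne
  convert this using 2 with u
  rfl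

/-- With the shift `ψ(t) = λᵐ(t) + D(t) − y₀·E(t)`, the CIR++ model survival probability
`e^{−∫₀ᵗψ}·A(0,t)·e^{−B(0,t)y₀}` equals the market survival probability `e^{−Λᵐ(t)}`
for every `t ≥ 0`. -/
theorem cir_shift_fits_market (κ θ σ : ℝ) (hκ : 0 < κ) (hθ : 0 < θ) (hσ : 0 < σ)
    (y₀ : ℝ) (lamM : ℝ → ℝ) (hlamM : Continuous lamM)
    (ψ : ℝ → ℝ)
    (hψ : ∀ t, ψ t = lamM t + cirD κ θ σ t - y₀ * cirE κ σ t) :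
    ∀ t : ℝ, 0 ≤ t →
      Real.exp (-(∫ s in (0:ℝ)..t, ψ s)) * cirA κ θ σ t * Real.exp (-(cirB κ σ t) * y₀)
        = Real.exp (-(∫ s in (0:ℝ)..t, lamM s)) := by
  intro t ht
  have hDint : IntervalIntegrable (cirD κ θ σ) MeasureTheory.volume 0 t :=
    (cirD_contOn hκ hσ ht).intervalIntegrable
  have hEint : IntervalIntegrable (cirE κ σ) MeasureTheory.volume 0 t :=
    (cirE_contOn hκ hσ ht).intervalIntegrable
  have hLint : IntervalIntegrable lamM MeasureTheory.volume 0 t :=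
    hlamM.intervalIntegrable 0 t
  have hD : (∫ s in (0:ℝ)..t, cirD κ θ σ s) = cirL κ θ σ t - cirL κ θ σ 0 := by
    apply intervalIntegral.integral_eq_sub_of_hasDerivAt
    · intro x hx
      rw [Set.uIcc_of_le ht] at hx
      exact cirL_hasDeriv hκ hσ hx.1
    · exact hDint
  have hE : (∫ s in (0:ℝ)..t, cirE κ σ s) = cirB κ σ t - cirB κ σ 0 := by
    apply intervalIntegral.integral_eq_sub_of_hasDerivAt
    · intro x hx
      rw [Set.uIcc_of_le ht] at hx
      exact cirB_hasDeriv hκ hσ hx.1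
    · exact hEint
  have hsplit : (∫ s in (0:ℝ)..t, ψ s) =
      (∫ s in (0:ℝ)..t, lamM s) + (∫ s in (0:ℝ)..t, cirD κ θ σ s)
        - y₀ * (∫ s in (0:ℝ)..t, cirE κ σ s) := by
    have : (∫ s in (0:ℝ)..t, ψ s)
        = ∫ s in (0:ℝ)..t, (lamM s + cirD κ θ σ s - y₀ * cirE κ σ s) := by
      apply intervalIntegral.integral_congr
      intro s _
      exact hψ s
    rw [this, intervalIntegral.integral_sub (hLint.add hDint) (hEint.const_mul y₀),
      intervalIntegral.integral_add hLint hDint, intervalIntegral.integral_const_mul]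
  rw [hsplit, hD, hE, cirL_zero, cirB_zero, ← exp_cirL hκ hσ ht, ← Real.exp_add, ← Real.exp_add]
  congr 1
  ring
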